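/- Let A ⊆ ℝⁿ be an H-polyhedron with nonempty interior and suppose A = ⋂_{i=1}^t Cᵢ is an irredundant decomposition of A into closed half-spaces. Then, up to reordering, the half-spaces C₁, …, C_t are uniquely determined by A: if A = ⋂_{i=1}^t C'ᵢ is another irredundant decomposition into closed half-spaces, then (C'₁, …, C'_t) is a permutation of (C₁, …, C_t). -/

import Mathlib

open RealInnerProductSpace

/-- A closed half-space in `ℝⁿ`: `{x | ⟪a, x⟫ ≤ b}` with `a ≠ 0`. -/
def IsClosedHalfSpace {n : ℕ} (C : Set (EuclideanSpace ℝ (Fin n))) : Prop :=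
  ∃ (a : EuclideanSpace ℝ (Fin n)) (b : ℝ), a ≠ 0 ∧
    C = {x : EuclideanSpace ℝ (Fin n) | ⟪a, x⟫ ≤ b}

lemma strict_of_ball_subset {n : ℕ} {a z : EuclideanSpace ℝ (Fin n)} {b r : ℝ}
    (ha : a ≠ 0) (hr : 0 < r)
    (h : Metric.ball z r ⊆ {x | ⟪a, x⟫ ≤ b}) : ⟪a, z⟫ < b := by
  have hna : (0:ℝ) < ‖a‖ := norm_pos_iff.mpr ha
  set s : ℝ := r / (2 * ‖a‖) with hs
  have hspos : 0 < s := by positivity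
  have key : ‖a‖ * s = r / 2 := by rw [hs]; field_simp
  have hmem : z + s • a ∈ Metric.ball z r := by
    rw [Metric.mem_ball, dist_eq_norm, add_sub_cancel_left, norm_smul,
      Real.norm_eq_abs, abs_of_pos hspos]
    nlinarith
  have h2 := h hmem
  simp only [Set.mem_setOf_eq, inner_add_right, inner_smul_right, real_inner_self_eq_norm_sq] at h2
  have : 0 < s * ‖a‖ ^ 2 := by positivity
  linarith

lemma root_set_finite {A B : ℝ} (h : A ≠ 0 ∨ B ≠ 0) :
    {σ : ℝ | A + σ * B = 0}.Finite := by
  rcases eq_or_ne B 0 with hB | hB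
  · have hA : A ≠ 0 := by tauto
    convert Set.finite_empty
    ext σ; simp [hB, hA]
  · apply Set.Subsingleton.finite
    intro σ hσ τ hτ
    simp only [Set.mem_setOf_eq] at hσ hτ
    have : σ * B = τ * B := by linarith
    exact mul_right_cancel₀ hB this

lemma avoid {n : ℕ} {ι : Type*} (a' : EuclideanSpace ℝ (Fin n))
    (u : ι → EuclideanSpace ℝ (Fin n)) (c : ι → ℝ) (s : Finset ι)
    (h : ∀ i ∈ s, c i ≠ 0 ∨ ∃ w, ⟪a', w⟫ = 0 ∧ ⟪u i, w⟫ ≠ 0) :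
    ∀ ε > 0, ∃ v : EuclideanSpace ℝ (Fin n), ⟪a', v⟫ = 0 ∧ ‖v‖ < ε ∧
      ∀ i ∈ s, c i + ⟪u i, v⟫ ≠ 0 := by
  classical
  induction s using Finset.induction_on with
  | empty =>
    intro ε hε
    exact ⟨0, inner_zero_right a', by simpa using hε, by simp⟩
  | @insert j s hj IH =>
    intro ε hε
    obtain ⟨v, hv1, hv2, hv3⟩ := IH (fun i hi => h i (Finset.mem_insert_of_mem hi)) ε hε
    by_cases h0 : c j + ⟪u j, v⟫ ≠ 0
    · refine ⟨v, hv1, hv2, fun i hi => ?_⟩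
      rcases Finset.mem_insert.mp hi with rfl | hi
      · exact h0
      · exact hv3 i hi
    · push_neg at h0
      obtain ⟨w, hw1, hw2⟩ : ∃ w, ⟪a', w⟫ = 0 ∧ ⟪u j, w⟫ ≠ 0 := by
        rcases h j (Finset.mem_insert_self j s) with hc | hw
        · exact ⟨v, hv1, fun hzero => hc (by linarith)⟩
        · exact hw
      have hwn : (0:ℝ) < ‖w‖ := norm_pos_iff.mpr (fun hw0 => hw2 (by simp [hw0]))
      set δ : ℝ := (ε - ‖v‖) / ‖w‖ with hδ
      have hδpos : 0 < δ := div_pos (by linarith) hwn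
      have hbad : (⋃ i ∈ insert j s, {σ : ℝ | (c i + ⟪u i, v⟫) + σ * ⟪u i, w⟫ = 0}).Finite := by
        apply Set.Finite.biUnion (Finset.finite_toSet _)
        intro i hi
        rcases Finset.mem_insert.mp (by simpa using hi) with rfl | his
        · exact root_set_finite (Or.inr hw2)
        · exact root_set_finite (Or.inl (hv3 i his))
      have hIoo : (Set.Ioo (0:ℝ) δ).Infinite := Set.Ioo_infinite hδpos
      obtain ⟨σ, hσ⟩ := (hIoo.diff hbad).nonempty
      obtain ⟨⟨hσ0, hσδ⟩, hσbad⟩ := hσ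
      refine ⟨v + σ • w, ?_, ?_, ?_⟩
      · rw [inner_add_right, inner_smul_right, hv1, hw1]; ring
      · calc ‖v + σ • w‖ ≤ ‖v‖ + ‖σ • w‖ := norm_add_le _ _
          _ = ‖v‖ + σ * ‖w‖ := by rw [norm_smul, Real.norm_eq_abs, abs_of_pos hσ0]
          _ < ‖v‖ + δ * ‖w‖ := by nlinarith
          _ = ε := by rw [hδ]; field_simp; ring
      · intro i hi hzero
        apply hσbad
        simp only [Set.mem_iUnion, Set.mem_setOf_eq]
        exact ⟨i, hi, by rw [inner_add_right, inner_smul_right] at hzero; linarith⟩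

lemma match_one {n t : ℕ} (A : Set (EuclideanSpace ℝ (Fin n)))
    (a : Fin t → EuclideanSpace ℝ (Fin n)) (b : Fin t → ℝ) (ha : ∀ i, a i ≠ 0)
    (hA : A = ⋂ i, {x : EuclideanSpace ℝ (Fin n) | ⟪a i, x⟫ ≤ b i})
    (C' : Fin t → Set (EuclideanSpace ℝ (Fin n)))
    (hC' : ∀ j, IsClosedHalfSpace (C' j)) (hA' : A = ⋂ j, C' j)
    (k : Fin t) (a' : EuclideanSpace ℝ (Fin n)) (b' : ℝ) (ha' : a' ≠ 0)
    (hC'k : C' k = {x : EuclideanSpace ℝ (Fin n) | ⟪a', x⟫ ≤ b'})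
    (z : EuclideanSpace ℝ (Fin n)) (r : ℝ) (hr : 0 < r)
    (hball : Metric.ball z r ⊆ A)
    (x : EuclideanSpace ℝ (Fin n)) (hx1 : x ∉ C' k) (hx2 : ∀ j, j ≠ k → x ∈ C' j) :
    ∃ i, {y : EuclideanSpace ℝ (Fin n) | ⟪a i, y⟫ ≤ b i} = C' k := by
  classical
  choose a'' b'' ha'' hC'e using hC'
  -- strict inequalities at the interior point z
  have hza : ∀ i, ⟪a i, z⟫ < b i := fun i =>
    strict_of_ball_subset (ha i) hr (hball.trans (by rw [hA]; exact Set.iInter_subset _ i))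
  have hza'' : ∀ j, ⟪a'' j, z⟫ < b'' j := fun j =>
    strict_of_ball_subset (ha'' j) hr (hball.trans (by rw [hA', ← hC'e j]; exact Set.iInter_subset _ j))
  have hza' : ⟪a', z⟫ < b' :=
    strict_of_ball_subset ha' hr (hball.trans (by rw [hA', ← hC'k]; exact Set.iInter_subset _ k))
  have hbx : b' < ⟪a', x⟫ := by
    by_contra hle
    exact hx1 (by rw [hC'k]; exact not_lt.mp hle)
  have hdenom : (0:ℝ) < ⟪a', x⟫ - ⟪a', z⟫ := by linarith
  set s : ℝ := (b' - ⟪a', z⟫) / (⟪a', x⟫ - ⟪a', z⟫) with hsdef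
  have hs0 : 0 < s := div_pos (by linarith) hdenom
  have hs1 : s < 1 := (div_lt_one hdenom).mpr (by linarith)
  set p : EuclideanSpace ℝ (Fin n) := z + s • (x - z) with hpdef
  have hinner : ∀ u : EuclideanSpace ℝ (Fin n), ⟪u, p⟫ = ⟪u, z⟫ + s * (⟪u, x⟫ - ⟪u, z⟫) := by
    intro u
    rw [hpdef, inner_add_right, inner_smul_right, inner_sub_right]
  have hp : ⟪a', p⟫ = b' := by
    rw [hinner]
    have : s * (⟪a', x⟫ - ⟪a', z⟫) = b' - ⟪a', z⟫ := by
      rw [hsdef]; exact div_mul_cancel₀ _ (ne_of_gt hdenom)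
    linarith
  have hpj : ∀ j, j ≠ k → ⟪a'' j, p⟫ < b'' j := by
    intro j hj
    have hxj : ⟪a'' j, x⟫ ≤ b'' j := by
      have := hx2 j hj; rwa [hC'e j] at this
    rw [hinner]
    nlinarith [mul_le_mul_of_nonneg_left hxj hs0.le,
      mul_pos (sub_pos.mpr hs1) (sub_pos.mpr (hza'' j))]
  -- open neighborhood where all other constraints are strict
  set U : Set (EuclideanSpace ℝ (Fin n)) :=
    ⋂ j, {y : EuclideanSpace ℝ (Fin n) | j ≠ k → ⟪a'' j, y⟫ < b'' j} with hUdef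
  have hUopen : IsOpen U := by
    apply isOpen_iInter_of_finite
    intro j
    by_cases hj : j = k
    · simp [hj]
    · have : {y : EuclideanSpace ℝ (Fin n) | j ≠ k → ⟪a'' j, y⟫ < b'' j}
          = {y : EuclideanSpace ℝ (Fin n) | ⟪a'' j, y⟫ < b'' j} := by
        ext y; simp [hj]
      rw [this]
      exact isOpen_lt (Continuous.inner continuous_const continuous_id) continuous_const
  have hpU : p ∈ U := Set.mem_iInter.mpr fun j hj => hpj j hj
  obtain ⟨ε, hε, hballU⟩ := Metric.isOpen_iff.mp hUopen p hpU
  -- key covering fact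
  have key : ∀ v : EuclideanSpace ℝ (Fin n), ⟪a', v⟫ = 0 → ‖v‖ < ε →
      ∃ i, ⟪a i, p + v⟫ = b i := by
    intro v hv hvn
    have hqU : p + v ∈ U := hballU (by
      rw [Metric.mem_ball, dist_eq_norm, add_sub_cancel_left]; exact hvn)
    have hqA : p + v ∈ A := by
      rw [hA']
      refine Set.mem_iInter.mpr fun j => ?_
      by_cases hj : j = k
      · subst hj
        rw [hC'k]
        show ⟪a', p + v⟫ ≤ b'
        rw [inner_add_right, hv, hp]; linarith
      · rw [hC'e j]
        exact le_of_lt (Set.mem_iInter.mp hqU j hj)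
    by_contra hcon
    push_neg at hcon
    have hstrict : ∀ i, ⟪a i, p + v⟫ < b i := by
      intro i
      have hle : ⟪a i, p + v⟫ ≤ b i := by
        rw [hA] at hqA; exact Set.mem_iInter.mp hqA i
      exact lt_of_le_of_ne hle (hcon i)
    set W : Set (EuclideanSpace ℝ (Fin n)) := ⋂ i, {y : EuclideanSpace ℝ (Fin n) | ⟪a i, y⟫ < b i}
    have hWopen : IsOpen W := isOpen_iInter_of_finite fun i =>
      isOpen_lt (Continuous.inner continuous_const continuous_id) continuous_const
    have hWA : W ⊆ A := by
      rw [hA]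
      refine Set.iInter_mono fun i y hy => ?_
      simp only [Set.mem_setOf_eq] at hy ⊢
      exact le_of_lt hy
    obtain ⟨ρ, hρ, hballW⟩ := Metric.isOpen_iff.mp hWopen _ (Set.mem_iInter.mpr hstrict)
    have hlt : ⟪a', p + v⟫ < b' := by
      refine strict_of_ball_subset ha' hρ (fun y hy => ?_)
      have hyA := hWA (hballW hy)
      rw [hA'] at hyA
      have := Set.mem_iInter.mp hyA k
      rwa [hC'k] at this
    rw [inner_add_right, hv, hp] at hlt
    linarith
  -- find the matching hyperplane via the avoidance lemma
  have hmain : ∃ i, ⟪a i, p⟫ = b i ∧ ∀ v, ⟪a', v⟫ = 0 → ⟪a i, v⟫ = 0 := by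
    by_contra hcon
    push_neg at hcon
    have h : ∀ i ∈ (Finset.univ : Finset (Fin t)),
        (⟪a i, p⟫ - b i) ≠ 0 ∨ ∃ w, ⟪a', w⟫ = 0 ∧ ⟪a i, w⟫ ≠ 0 := by
      intro i _
      by_cases hip : ⟪a i, p⟫ = b i
      · exact Or.inr (hcon i hip)
      · exact Or.inl (sub_ne_zero_of_ne hip)
    obtain ⟨v, hv1, hv2, hv3⟩ := avoid a' a (fun i => ⟪a i, p⟫ - b i) Finset.univ h ε hε
    obtain ⟨i, hi⟩ := key v hv1 hv2
    exact hv3 i (Finset.mem_univ i) (by rw [inner_add_right] at hi; linarith)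
  obtain ⟨i, hip, hiorth⟩ := hmain
  -- a i is a positive multiple of a'
  set c : ℝ := ⟪a', a i⟫ / ‖a'‖ ^ 2 with hcdef
  have hna' : (0:ℝ) < ‖a'‖ := norm_pos_iff.mpr ha'
  have hv0 : ⟪a', a i - c • a'⟫ = 0 := by
    rw [inner_sub_right, inner_smul_right, real_inner_self_eq_norm_sq, hcdef]
    field_simp; ring
  have hvi : ⟪a i, a i - c • a'⟫ = 0 := hiorth _ hv0
  have hself : ⟪a i - c • a', a i - c • a'⟫ = (0:ℝ) := by
    rw [inner_sub_left, real_inner_smul_left, hv0, hvi]; ring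
  have hv : a i = c • a' := by
    have h0 := inner_self_eq_zero.mp hself
    rwa [sub_eq_zero] at h0
  have hc0 : c ≠ 0 := fun h => ha i (by rw [hv, h, zero_smul])
  have hbi : b i = c * b' := by rw [← hip, hv, real_inner_smul_left, hp]
  have hzi : ⟪a i, z⟫ < b i := hza i
  have hcpos : 0 < c := by
    rw [hv, real_inner_smul_left, hbi] at hzi
    rcases lt_trichotomy c 0 with h | h | h
    · exfalso; nlinarith [mul_pos_of_neg_of_neg h (sub_neg.mpr hza')]
    · exact absurd h hc0
    · exact h
  refine ⟨i, ?_⟩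
  rw [hC'k]
  ext y
  simp only [Set.mem_setOf_eq, hv, real_inner_smul_left, hbi]
  exact mul_le_mul_iff_right₀ hcpos

lemma necessity {n t : ℕ} (A : Set (EuclideanSpace ℝ (Fin n)))
    (C : Fin t → Set (EuclideanSpace ℝ (Fin n)))
    (hC : ∀ i, IsClosedHalfSpace (C i)) (hA : A = ⋂ i, C i)
    (hirr : ¬ ∃ m : ℕ, m < t ∧ ∃ D : Fin m → Set (EuclideanSpace ℝ (Fin n)),
      (∀ i, IsClosedHalfSpace (D i)) ∧ A = ⋂ i, D i) (i : Fin t) :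
    ∃ x, x ∉ C i ∧ ∀ j, j ≠ i → x ∈ C j := by
  by_contra hcon
  push_neg at hcon
  have hsub : ∀ x, (∀ j, j ≠ i → x ∈ C j) → x ∈ C i := by
    intro x hx
    by_contra hxi
    obtain ⟨j, hji, hj⟩ := hcon x hxi
    exact hj (hx j hji)
  have ht : t ≠ 0 := fun h => (h ▸ i).elim0
  obtain ⟨m, rfl⟩ := Nat.exists_eq_succ_of_ne_zero ht
  apply hirr
  refine ⟨m, Nat.lt_succ_self m, fun j => C (i.succAbove j), fun j => hC _, ?_⟩
  apply Set.Subset.antisymm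
  · intro x hx
    rw [hA] at hx
    exact Set.mem_iInter.mpr fun j => Set.mem_iInter.mp hx _
  · intro x hx
    rw [hA]
    have hne : ∀ j, j ≠ i → x ∈ C j := by
      intro j hji
      obtain ⟨j', hj'⟩ := Fin.exists_succAbove_eq hji
      rw [← hj']
      exact Set.mem_iInter.mp hx j'
    refine Set.mem_iInter.mpr fun j => ?_
    by_cases hji : j = i
    · exact hji ▸ hsub x hne
    · exact hne j hji

/-- The half-spaces in an irredundant decomposition of a polyhedron with nonempty
interior are unique up to reordering. -/
theorem irredundant_decomposition_unique (n t : ℕ)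
    (A : Set (EuclideanSpace ℝ (Fin n))) (hint : (interior A).Nonempty)
    (C C' : Fin t → Set (EuclideanSpace ℝ (Fin n)))
    (hC : ∀ i, IsClosedHalfSpace (C i)) (hC' : ∀ i, IsClosedHalfSpace (C' i))
    (hA : A = ⋂ i, C i) (hA' : A = ⋂ i, C' i)
    (hirr : ¬ ∃ m : ℕ, m < t ∧ ∃ D : Fin m → Set (EuclideanSpace ℝ (Fin n)),
      (∀ i, IsClosedHalfSpace (D i)) ∧ A = ⋂ i, D i) :
    ∃ σ : Equiv.Perm (Fin t), ∀ i, C' i = C (σ i) := by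
  classical
  choose a b ha hCe using hC
  obtain ⟨z, hz⟩ := hint
  obtain ⟨r, hr, hballint⟩ := Metric.isOpen_iff.mp isOpen_interior z hz
  have hball : Metric.ball z r ⊆ A := hballint.trans interior_subset
  have hAeq : A = ⋂ i, {x : EuclideanSpace ℝ (Fin n) | ⟪a i, x⟫ ≤ b i} := by
    rw [hA]; exact Set.iInter_congr hCe
  have hnec : ∀ k, ∃ x, x ∉ C' k ∧ ∀ j, j ≠ k → x ∈ C' j :=
    necessity A C' hC' hA' hirr
  have hmatch : ∀ k, ∃ i, C i = C' k := by
    intro k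
    obtain ⟨x, hx1, hx2⟩ := hnec k
    obtain ⟨a', b', ha', hC'k⟩ := hC' k
    obtain ⟨i, hi⟩ := match_one A a b ha hAeq C' hC' hA' k a' b' ha' hC'k z r hr
      hball x hx1 hx2
    exact ⟨i, by rw [hCe i, hi]⟩
  choose f hf using hmatch
  have hC'inj : Function.Injective C' := by
    intro k1 k2 h12
    by_contra hne
    obtain ⟨x, hx1, hx2⟩ := hnec k1
    have hx3 := hx2 k2 (Ne.symm hne)
    rw [← h12] at hx3
    exact hx1 hx3
  have hfinj : Function.Injective f := by
    intro k1 k2 h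
    apply hC'inj
    rw [← hf k1, ← hf k2, h]
  have hbij := Finite.injective_iff_bijective.mp hfinj
  exact ⟨Equiv.ofBijective f hbij, fun i => (hf i).symm⟩
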